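/- For the Laplace distribution with location 0 and scale α > 0, the integral J = ∫∫∫_{y < x < z} (x−y)(z−x) f(z) f(y) f(x) dz dy dx, where f(x) = (1/(2α))·exp(−|x|/α), equals 5α²/24. -/

import Mathlib

open MeasureTheory

/-- Density of the Laplace distribution with location `0` and scale `α`. -/
noncomputable def laplaceDensity (α x : ℝ) : ℝ :=
  (1 / (2 * α)) * Real.exp (-|x| / α)

open Set Filter Real

private lemma tendsto_linexp {b : ℝ} (p q : ℝ) (hb : 0 < b) :
    Tendsto (fun x => (p * x + q) * Real.exp (-b * x)) atTop (nhds 0) := by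
  have h1 : Tendsto (fun x : ℝ => x ^ (1 : ℝ) * Real.exp (-b * x)) atTop (nhds 0) :=
    tendsto_rpow_mul_exp_neg_mul_atTop_nhds_zero 1 b hb
  have h0 : Tendsto (fun x : ℝ => x ^ (0 : ℝ) * Real.exp (-b * x)) atTop (nhds 0) :=
    tendsto_rpow_mul_exp_neg_mul_atTop_nhds_zero 0 b hb
  simp only [Real.rpow_one, Real.rpow_zero, one_mul] at h1 h0
  have := (h1.const_mul p).add (h0.const_mul q)
  simpa only [mul_zero, add_zero, zero_add] using this.congr (fun x => by ring)

private lemma hasDerivAt_linexp (b p q x : ℝ) (hb : b ≠ 0) :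
    HasDerivAt (fun x => ((p * x + q) / b - p / b ^ 2) * Real.exp (b * x))
      ((p * x + q) * Real.exp (b * x)) x := by
  have h1 : HasDerivAt (fun x : ℝ => (p * x + q) / b - p / b ^ 2) (p / b) x := by
    have : HasDerivAt (fun x : ℝ => p * x + q) p x := by
      simpa using ((hasDerivAt_id x).const_mul p).add_const q
    simpa using (this.div_const b).sub_const (p / b ^ 2)
  have h2 : HasDerivAt (fun x : ℝ => Real.exp (b * x)) (Real.exp (b * x) * b) x := by
    simpa using ((hasDerivAt_id x).const_mul b).exp
  have := h1.mul h2
  refine this.congr_deriv ?_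
  field_simp
  ring

private lemma integral_Ioi_linexp {b : ℝ} (p q c : ℝ) (hb : 0 < b)
    (hpos : ∀ x ∈ Ioi c, 0 ≤ p * x + q) :
    ∫ x in Ioi c, (p * x + q) * Real.exp (-b * x)
      = ((p * c + q) / b + p / b ^ 2) * Real.exp (-b * c) := by
  have hder : ∀ x ∈ Ici c,
      HasDerivAt (fun x => ((p * x + q) / (-b) - p / (-b) ^ 2) * Real.exp (-b * x))
        ((p * x + q) * Real.exp (-b * x)) x := fun x _ =>
    hasDerivAt_linexp (-b) p q x (by linarith)
  have htend : Tendsto (fun x => ((p * x + q) / (-b) - p / (-b) ^ 2) * Real.exp (-b * x))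
      atTop (nhds 0) := by
    have := tendsto_linexp (p / (-b)) (q / (-b) - p / (-b) ^ 2) hb
    exact this.congr (fun x => by ring)
  have := integral_Ioi_of_hasDerivAt_of_nonneg' hder
    (fun x hx => mul_nonneg (hpos x hx) (Real.exp_nonneg _)) htend
  rw [this, zero_sub, ← neg_mul]
  congr 1
  rw [div_neg, neg_sq]
  ring

private lemma integrableOn_Ioi_linexp {b : ℝ} (p q c : ℝ) (hb : 0 < b)
    (hpos : ∀ x ∈ Ioi c, 0 ≤ p * x + q) :
    IntegrableOn (fun x => (p * x + q) * Real.exp (-b * x)) (Ioi c) := by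
  have hder : ∀ x ∈ Ici c,
      HasDerivAt (fun x => ((p * x + q) / (-b) - p / (-b) ^ 2) * Real.exp (-b * x))
        ((p * x + q) * Real.exp (-b * x)) x := fun x _ =>
    hasDerivAt_linexp (-b) p q x (by linarith)
  have htend : Tendsto (fun x => ((p * x + q) / (-b) - p / (-b) ^ 2) * Real.exp (-b * x))
      atTop (nhds 0) := by
    have := tendsto_linexp (p / (-b)) (q / (-b) - p / (-b) ^ 2) hb
    exact this.congr (fun x => by ring)
  exact integrableOn_Ioi_deriv_of_nonneg' hder
    (fun x hx => mul_nonneg (hpos x hx) (Real.exp_nonneg _)) htend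

private lemma integral_Iic_linexp {b : ℝ} (p q c : ℝ) (hb : 0 < b)
    (hpos : ∀ x ∈ Iic c, 0 ≤ p * x + q) :
    ∫ x in Iic c, (p * x + q) * Real.exp (b * x)
      = ((p * c + q) / b - p / b ^ 2) * Real.exp (b * c) := by
  have h1 : ∫ x in Iic c, (p * x + q) * Real.exp (b * x)
      = ∫ x in Iic c, ((-p) * (-x) + q) * Real.exp (-b * (-x)) :=
    setIntegral_congr_fun measurableSet_Iic (fun x _ => by ring_nf)
  have key := integral_comp_neg_Iic c (fun y => ((-p) * y + q) * Real.exp (-b * y))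
  have h2 := integral_Ioi_linexp (-p) q (-c) hb (fun x hx => by
      have hx' : -c < x := hx
      have := hpos (-x) (by simp only [Set.mem_Iic]; linarith)
      linarith)
  rw [h1]
  refine key.trans (h2.trans ?_)
  rw [show -b * -c = b * c by ring, neg_div, show (-p : ℝ) * -c + q = p * c + q by ring]
  ring

private lemma integrableOn_Iic_linexp {b : ℝ} (p q c : ℝ) (hb : 0 < b)
    (hpos : ∀ x ∈ Iic c, 0 ≤ p * x + q) :
    IntegrableOn (fun x => (p * x + q) * Real.exp (b * x)) (Iic c) := by
  have A : MeasurableEmbedding (fun x : ℝ => -x) :=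
    (Homeomorph.neg ℝ).isClosedEmbedding.measurableEmbedding
  have h1 : IntegrableOn (fun x => ((-p) * x + q) * Real.exp (-b * x)) (Ioi (-c)) :=
    integrableOn_Ioi_linexp (-p) q (-c) hb (fun x hx => by
      have hx' : -c < x := hx
      have := hpos (-x) (by simp only [mem_Iic]; linarith)
      linarith)
  have h2 : IntegrableOn (fun x => (p * (-x) + q) * Real.exp (b * (-x))) (Ioi (-c)) := by
    apply h1.congr_fun (fun x _ => by ring_nf) measurableSet_Ioi
  have h_map_neg : (volume.restrict (Ici (-c))).map (Neg.neg : ℝ → ℝ)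
      = volume.restrict (Iic c) := by
    conv => rhs; rw [← Measure.map_neg_eq_self (volume : Measure ℝ),
      measurableEmbedding_neg.restrict_map]
    congr 1
    ext x
    simp [neg_le]
  rw [IntegrableOn, ← h_map_neg, measurableEmbedding_neg.integrable_map_iff]
  have h3 : IntegrableOn (fun x => (p * (-x) + q) * Real.exp (b * (-x))) (Ici (-c)) := by
    rwa [integrableOn_Ici_iff_integrableOn_Ioi]
  exact h3.congr_fun (fun x _ => by simp only [Function.comp]) measurableSet_Ici

private lemma integral_Ioc_linexp (b p q u v : ℝ) (hb : b ≠ 0) (huv : u ≤ v) :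
    ∫ x in Ioc u v, (p * x + q) * Real.exp (b * x)
      = ((p * v + q) / b - p / b ^ 2) * Real.exp (b * v)
        - ((p * u + q) / b - p / b ^ 2) * Real.exp (b * u) := by
  rw [← intervalIntegral.integral_of_le huv]
  exact intervalIntegral.integral_eq_sub_of_hasDerivAt
    (fun t _ => hasDerivAt_linexp b p q t hb)
    (Continuous.intervalIntegrable
      (((continuous_const.mul continuous_id).add continuous_const).mul
        (Real.continuous_exp.comp (continuous_const.mul continuous_id))) u v)

private lemma continuous_laplace (α : ℝ) :
    Continuous (fun z : ℝ => laplaceDensity α z) := by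
  unfold laplaceDensity
  exact continuous_const.mul (Real.continuous_exp.comp (continuous_abs.neg.div_const α))

private lemma lapB_nonneg {α x : ℝ} (hα : 0 < α) (hx : 0 ≤ x) :
    ∫ z in Ioi x, (z - x) * laplaceDensity α z
      = α / 2 * Real.exp (-(1 / α) * x) := by
  have hα' : α ≠ 0 := hα.ne'
  have h1 : ∀ z ∈ Ioi x, (z - x) * laplaceDensity α z
      = (1 / (2 * α) * z + -(x / (2 * α))) * Real.exp (-(1 / α) * z) := by
    intro z hz
    have hz' : x < z := hz
    rw [laplaceDensity, abs_of_pos (lt_of_le_of_lt hx hz'),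
      show -z / α = -(1 / α) * z by ring]
    ring
  rw [setIntegral_congr_fun measurableSet_Ioi h1,
    integral_Ioi_linexp (1 / (2 * α)) (-(x / (2 * α))) x (by positivity)
      (fun z hz => by
        have hz' : x < z := hz
        have h2α : (0:ℝ) < 2 * α := by linarith
        have : 1 / (2 * α) * z + -(x / (2 * α)) = (z - x) / (2 * α) := by ring
        rw [this]
        exact div_nonneg (by linarith) (by linarith))]
  congr 1
  field_simp
  ring

private lemma lapB_neg {α x : ℝ} (hα : 0 < α) (hx : x < 0) :
    ∫ z in Ioi x, (z - x) * laplaceDensity α z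
      = -x + α / 2 * Real.exp ((1 / α) * x) := by
  have hα' : α ≠ 0 := hα.ne'
  have hcont : Continuous (fun z : ℝ => (z - x) * laplaceDensity α z) :=
    (continuous_id.sub continuous_const).mul (continuous_laplace α)
  have hint2 : IntegrableOn (fun z : ℝ => (z - x) * laplaceDensity α z) (Ioi 0) := by
    refine (integrableOn_Ioi_linexp (b := 1 / α) (1 / (2 * α)) (-(x / (2 * α))) 0 (by positivity)
      (fun z hz => by
        have hz' : (0:ℝ) < z := hz
        have : 1 / (2 * α) * z + -(x / (2 * α)) = (z - x) / (2 * α) := by ring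
        rw [this]
        exact div_nonneg (by linarith) (by linarith))).congr_fun
      (fun z hz => ?_) measurableSet_Ioi
    have hz' : (0:ℝ) < z := hz
    rw [laplaceDensity, abs_of_pos hz', show -z / α = -(1 / α) * z by ring]
    ring
  have hsplit : ∫ z in Ioi x, (z - x) * laplaceDensity α z
      = (∫ z in Ioc x 0, (z - x) * laplaceDensity α z)
        + ∫ z in Ioi 0, (z - x) * laplaceDensity α z := by
    rw [← setIntegral_union Ioc_disjoint_Ioi_same measurableSet_Ioi
      (hcont.integrableOn_Ioc) hint2, Ioc_union_Ioi_eq_Ioi hx.le]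
  rw [hsplit]
  have h1 : ∀ z ∈ Ioc x 0, (z - x) * laplaceDensity α z
      = (1 / (2 * α) * z + -(x / (2 * α))) * Real.exp ((1 / α) * z) := by
    intro z hz
    rw [laplaceDensity, abs_of_nonpos hz.2, show - -z / α = (1 / α) * z by ring]
    ring
  have h2 : ∀ z ∈ Ioi (0:ℝ), (z - x) * laplaceDensity α z
      = (1 / (2 * α) * z + -(x / (2 * α))) * Real.exp (-(1 / α) * z) := by
    intro z hz
    have hz' : (0:ℝ) < z := hz
    rw [laplaceDensity, abs_of_pos hz', show -z / α = -(1 / α) * z by ring]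
    ring
  rw [setIntegral_congr_fun measurableSet_Ioc h1,
    setIntegral_congr_fun measurableSet_Ioi h2,
    integral_Ioc_linexp (1 / α) (1 / (2 * α)) (-(x / (2 * α))) x 0
      (by positivity) hx.le,
    integral_Ioi_linexp (1 / (2 * α)) (-(x / (2 * α))) 0 (by positivity)
      (fun z hz => by
        have hz' : (0:ℝ) < z := hz
        have : 1 / (2 * α) * z + -(x / (2 * α)) = (z - x) / (2 * α) := by ring
        rw [this]
        exact div_nonneg (by linarith) (by linarith))]
  have e0 : (1 / α) * (0:ℝ) = 0 := by ring
  have e1 : -(1 / α) * (0:ℝ) = 0 := by ring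
  rw [e0, e1, Real.exp_zero]
  field_simp
  ring

private lemma lapA_nonneg {α x : ℝ} (hα : 0 < α) (hx : 0 ≤ x) :
    ∫ y in Iio x, (x - y) * laplaceDensity α y
      = x + α / 2 * Real.exp (-(1 / α) * x) := by
  have hα' : α ≠ 0 := hα.ne'
  have hcont : Continuous (fun y : ℝ => (x - y) * laplaceDensity α y) :=
    (continuous_const.sub continuous_id).mul (continuous_laplace α)
  have hint1 : IntegrableOn (fun y : ℝ => (x - y) * laplaceDensity α y) (Iic 0) := by
    refine (integrableOn_Iic_linexp (b := 1 / α) (-(1 / (2 * α))) (x / (2 * α)) 0 (by positivity)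
      (fun y hy => by
        have hy' : y ≤ 0 := hy
        have : -(1 / (2 * α)) * y + x / (2 * α) = (x - y) / (2 * α) := by ring
        rw [this]
        exact div_nonneg (by linarith) (by linarith))).congr_fun
      (fun y hy => ?_) measurableSet_Iic
    have hy' : y ≤ 0 := hy
    rw [laplaceDensity, abs_of_nonpos hy', show - -y / α = (1 / α) * y by ring]
    ring
  have hsplit : ∫ y in Iio x, (x - y) * laplaceDensity α y
      = (∫ y in Iic 0, (x - y) * laplaceDensity α y)
        + ∫ y in Ioc 0 x, (x - y) * laplaceDensity α y := by
    rw [← integral_Iic_eq_integral_Iio,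
      ← setIntegral_union (Iic_disjoint_Ioc le_rfl) measurableSet_Ioc hint1
        (hcont.integrableOn_Ioc), Iic_union_Ioc_eq_Iic hx]
  rw [hsplit]
  have h1 : ∀ y ∈ Iic (0:ℝ), (x - y) * laplaceDensity α y
      = (-(1 / (2 * α)) * y + x / (2 * α)) * Real.exp ((1 / α) * y) := by
    intro y hy
    have hy' : y ≤ 0 := hy
    rw [laplaceDensity, abs_of_nonpos hy', show - -y / α = (1 / α) * y by ring]
    ring
  have h2 : ∀ y ∈ Ioc (0:ℝ) x, (x - y) * laplaceDensity α y
      = (-(1 / (2 * α)) * y + x / (2 * α)) * Real.exp (-(1 / α) * y) := by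
    intro y hy
    rw [laplaceDensity, abs_of_pos hy.1, show -y / α = -(1 / α) * y by ring]
    ring
  rw [setIntegral_congr_fun measurableSet_Iic h1,
    setIntegral_congr_fun measurableSet_Ioc h2,
    integral_Iic_linexp (-(1 / (2 * α))) (x / (2 * α)) 0 (by positivity)
      (fun y hy => by
        have hy' : y ≤ 0 := hy
        have : -(1 / (2 * α)) * y + x / (2 * α) = (x - y) / (2 * α) := by ring
        rw [this]
        exact div_nonneg (by linarith) (by linarith)),
    integral_Ioc_linexp (-(1 / α)) (-(1 / (2 * α))) (x / (2 * α)) 0 x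
      (by simp [hα']) hx]
  have e0 : (1 / α) * (0:ℝ) = 0 := by ring
  have e1 : -(1 / α) * (0:ℝ) = 0 := by ring
  rw [e0, e1, Real.exp_zero]
  rw [show (-(1 / α)) ^ 2 = (1 / α) ^ 2 by ring]
  field_simp
  ring

private lemma lapA_neg {α x : ℝ} (hα : 0 < α) (hx : x < 0) :
    ∫ y in Iio x, (x - y) * laplaceDensity α y
      = α / 2 * Real.exp ((1 / α) * x) := by
  have hα' : α ≠ 0 := hα.ne'
  rw [← integral_Iic_eq_integral_Iio]
  have h1 : ∀ y ∈ Iic x, (x - y) * laplaceDensity α y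
      = (-(1 / (2 * α)) * y + x / (2 * α)) * Real.exp ((1 / α) * y) := by
    intro y hy
    have hy' : y ≤ x := hy
    rw [laplaceDensity, abs_of_nonpos (hy'.trans hx.le),
      show - -y / α = (1 / α) * y by ring]
    ring
  rw [setIntegral_congr_fun measurableSet_Iic h1,
    integral_Iic_linexp (-(1 / (2 * α))) (x / (2 * α)) x (by positivity)
      (fun y hy => by
        have hy' : y ≤ x := hy
        have : -(1 / (2 * α)) * y + x / (2 * α) = (x - y) / (2 * α) := by ring
        rw [this]
        exact div_nonneg (by linarith) (by linarith))]
  congr 1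
  field_simp
  ring

theorem stmt12 (α : ℝ) (hα : 0 < α) :
    (∫ x : ℝ, ∫ y in Set.Iio x, ∫ z in Set.Ioi x,
        (x - y) * (z - x) * laplaceDensity α z * laplaceDensity α y * laplaceDensity α x) =
      5 * α ^ 2 / 24 := by
  have hα' : α ≠ 0 := hα.ne'
  set f0 : ℝ → ℝ := fun t =>
    (1 / 4 * t + 0) * Real.exp (-(2 / α) * t) + (0 * t + α / 8) * Real.exp (-(3 / α) * t)
    with hf0
  have key : ∀ x : ℝ, (∫ y in Set.Iio x, ∫ z in Set.Ioi x,
      (x - y) * (z - x) * laplaceDensity α z * laplaceDensity α y * laplaceDensity α x)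
      = f0 |x| := by
    intro x
    have hz : ∀ y : ℝ, (∫ z in Set.Ioi x,
        (x - y) * (z - x) * laplaceDensity α z * laplaceDensity α y * laplaceDensity α x)
        = ((x - y) * laplaceDensity α y) *
          (laplaceDensity α x * ∫ z in Set.Ioi x, (z - x) * laplaceDensity α z) := by
      intro y
      rw [show (fun z => (x - y) * (z - x) * laplaceDensity α z * laplaceDensity α y *
            laplaceDensity α x)
          = fun z => ((x - y) * laplaceDensity α y * laplaceDensity α x) *
            ((z - x) * laplaceDensity α z) from funext fun z => by ring,
        integral_const_mul]
      ring
    rw [show (fun y => ∫ z in Set.Ioi x,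
        (x - y) * (z - x) * laplaceDensity α z * laplaceDensity α y * laplaceDensity α x)
      = fun y => ((x - y) * laplaceDensity α y) *
          (laplaceDensity α x * ∫ z in Set.Ioi x, (z - x) * laplaceDensity α z)
      from funext hz, integral_mul_const]
    rcases le_or_gt 0 x with hx | hx
    · rw [lapA_nonneg hα hx, lapB_nonneg hα hx, abs_of_nonneg hx, laplaceDensity,
        abs_of_nonneg hx, hf0]
      have e1 : Real.exp (-x / α) = Real.exp (-(1 / α) * x) := by
        congr 1; ring
      have e2 : Real.exp (-(2 / α) * x)
          = Real.exp (-(1 / α) * x) * Real.exp (-(1 / α) * x) := by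
        rw [← Real.exp_add]; congr 1; ring
      have e3 : Real.exp (-(3 / α) * x)
          = Real.exp (-(1 / α) * x) * (Real.exp (-(1 / α) * x) * Real.exp (-(1 / α) * x)) := by
        rw [← Real.exp_add, ← Real.exp_add]; congr 1; ring
      simp only [e1, e2, e3]
      field_simp
      ring
    · rw [lapA_neg hα hx, lapB_neg hα hx, abs_of_neg hx, laplaceDensity,
        abs_of_neg hx, hf0]
      have e1 : Real.exp (- -x / α) = Real.exp ((1 / α) * x) := by
        congr 1; ring
      have e2 : Real.exp (-(2 / α) * -x)
          = Real.exp ((1 / α) * x) * Real.exp ((1 / α) * x) := by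
        rw [← Real.exp_add]; congr 1; ring
      have e3 : Real.exp (-(3 / α) * -x)
          = Real.exp ((1 / α) * x) * (Real.exp ((1 / α) * x) * Real.exp ((1 / α) * x)) := by
        rw [← Real.exp_add, ← Real.exp_add]; congr 1; ring
      simp only [e1, e2, e3]
      field_simp
      ring
  calc (∫ x : ℝ, ∫ y in Set.Iio x, ∫ z in Set.Ioi x,
        (x - y) * (z - x) * laplaceDensity α z * laplaceDensity α y * laplaceDensity α x)
      = ∫ x : ℝ, f0 |x| := by
        congr 1
        funext x
        exact key x
    _ = 2 * ∫ x in Ioi (0:ℝ), f0 x := integral_comp_abs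
    _ = 2 * ((∫ x in Ioi (0:ℝ), (1 / 4 * x + 0) * Real.exp (-(2 / α) * x))
          + ∫ x in Ioi (0:ℝ), (0 * x + α / 8) * Real.exp (-(3 / α) * x)) := by
        rw [hf0, integral_add
          (integrableOn_Ioi_linexp (1 / 4) 0 0 (by positivity)
            (fun z hz => by
              have hz' : (0:ℝ) < z := hz
              linarith))
          (integrableOn_Ioi_linexp 0 (α / 8) 0 (by positivity)
            (fun z hz => by simp; positivity))]
    _ = 5 * α ^ 2 / 24 := by
        rw [integral_Ioi_linexp (1 / 4) 0 0 (by positivity)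
            (fun z hz => by
              have hz' : (0:ℝ) < z := hz
              linarith),
          integral_Ioi_linexp 0 (α / 8) 0 (by positivity)
            (fun z hz => by simp; positivity)]
        rw [show -(2 / α) * (0:ℝ) = 0 by ring, show -(3 / α) * (0:ℝ) = 0 by ring,
          Real.exp_zero]
        field_simp
        ring
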